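/- For all integers a, b ≥ 1, there exists a shiftable signed magic rectangle SMR(4b, 2b(4a+2); 4a+2, 2). -/

import Mathlib

/-- The set of values used by a signed magic rectangle SMR(m,n;r,s):
`{0, ±1, …, ±(ms−1)/2}` if `m*r` is odd, and `{±1, …, ±(m*r/2)}` if `m*r` is even. -/
def SMRvalue (m r s : ℕ) (x : ℤ) : Prop :=
  if m * r % 2 = 1 then |x| ≤ ((m : ℤ) * s - 1) / 2
  else x ≠ 0 ∧ |x| ≤ (m : ℤ) * r / 2

/-- `A` (a partially filled `m × n` integer array) is a signed magic rectangle
SMR(m,n;r,s): exactly `r` filled cells per row, `s` per column, every value of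
the value set appears exactly once, all entries are values, and all row and
column sums are zero. -/
def IsSMR (m n r s : ℕ) (A : Fin m → Fin n → Option ℤ) : Prop :=
  (∀ i, (Finset.univ.filter fun j => (A i j).isSome).card = r) ∧
  (∀ j, (Finset.univ.filter fun i => (A i j).isSome).card = s) ∧
  (∀ i j x, A i j = some x → SMRvalue m r s x) ∧
  (∀ x : ℤ, SMRvalue m r s x → ∃! p : Fin m × Fin n, A p.1 p.2 = some x) ∧
  (∀ i, ∑ j, (A i j).getD 0 = 0) ∧
  (∀ j, ∑ i, (A i j).getD 0 = 0)

/-- A signed magic rectangle SMR(m,n;r,s) exists. -/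
def SMR (m n r s : ℕ) : Prop := ∃ A : Fin m → Fin n → Option ℤ, IsSMR m n r s A

/-- The array has equally many positive and negative entries in every row and
in every column. -/
def IsShiftable (m n : ℕ) (A : Fin m → Fin n → Option ℤ) : Prop :=
  (∀ i, (Finset.univ.filter fun j => 0 < (A i j).getD 0).card =
        (Finset.univ.filter fun j => (A i j).getD 0 < 0).card) ∧
  (∀ j, (Finset.univ.filter fun i => 0 < (A i j).getD 0).card =
        (Finset.univ.filter fun i => (A i j).getD 0 < 0).card)

/-- A shiftable signed magic rectangle SMR(m,n;r,s) exists. -/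
def ShiftableSMR (m n r s : ℕ) : Prop :=
  ∃ A : Fin m → Fin n → Option ℤ, IsSMR m n r s A ∧ IsShiftable m n A



namespace SMR11

/-- base magnitude (1..8a+4) of the cell in block-row `u`, pair `p`, slot `ε`. -/
def mg (a u p ε : ℕ) : ℕ :=
  if u = 0 then (if p = 2*a then 4*a+1+2*ε else 2*p+1+ε)
  else 8*a+5 - (if p = 2*a then 4*a+1+2*ε else 2*p+1+ε)

/-- sign of the cell -/
def Pos (a u e p ε : ℕ) : Prop :=
  ((p = 0 ∨ p % 2 = 1) ∧ p ≠ 2*a) ↔ (ε + u + e) % 2 = 0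

instance (a u e p ε : ℕ) : Decidable (Pos a u e p ε) := by unfold Pos; exact inferInstance

def val (a t u e p ε : ℕ) : ℤ :=
  if Pos a u e p ε then ((mg a u p ε + t*(8*a+4) : ℕ) : ℤ)
  else -((mg a u p ε + t*(8*a+4) : ℕ) : ℤ)

def Arr (a b : ℕ) (i : Fin (4*b)) (j : Fin (2*b*(4*a+2))) : Option ℤ :=
  if j.val / (4*a+2) = i.val / 2 then
    some (val a (i.val/4) (i.val/2 % 2) (i.val % 2) (j.val % (4*a+2) / 2) (j.val % (4*a+2) % 2))
  else none

lemma mg_bounds (a u p ε : ℕ) (ha : 1 ≤ a) (hp : p ≤ 2*a) (hε : ε ≤ 1) :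
    1 ≤ mg a u p ε ∧ mg a u p ε ≤ 8*a+4 := by
  unfold mg; split_ifs <;> omega

lemma val_natAbs (a t u e p ε : ℕ) : (val a t u e p ε).natAbs = mg a u p ε + t*(8*a+4) := by
  unfold val; split_ifs <;>
    simp only [Int.natAbs_neg, Int.natAbs_natCast]

lemma val_pos_iff (a t u e p ε : ℕ) (ha : 1 ≤ a) (hp : p ≤ 2*a) (hε : ε ≤ 1) :
    0 < val a t u e p ε ↔ Pos a u e p ε := by
  have := mg_bounds a u p ε ha hp hε
  unfold val Pos; split_ifs <;> omega

lemma val_neg_iff (a t u e p ε : ℕ) (ha : 1 ≤ a) (hp : p ≤ 2*a) (hε : ε ≤ 1) :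
    val a t u e p ε < 0 ↔ ¬ Pos a u e p ε := by
  have := mg_bounds a u p ε ha hp hε
  unfold val Pos; split_ifs <;> omega

lemma Pos_flip_e (a u p ε : ℕ) : Pos a u 1 p ε ↔ ¬ Pos a u 0 p ε := by
  unfold Pos; omega

lemma Pos_flip_ε (a u e p : ℕ) : Pos a u e p 1 ↔ ¬ Pos a u e p 0 := by
  unfold Pos; omega

lemma val_add_e (a t u p ε : ℕ) : val a t u 0 p ε + val a t u 1 p ε = 0 := by
  unfold val Pos; split_ifs <;> omega

def dec (a m : ℕ) : ℕ × ℕ × ℕ :=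
  if m ≤ 4*a then (0, (m-1)/2, (m-1)%2)
  else if m = 4*a+1 then (0, 2*a, 0)
  else if m = 4*a+3 then (0, 2*a, 1)
  else if m = 4*a+2 then (1, 2*a, 1)
  else if m = 4*a+4 then (1, 2*a, 0)
  else (1, (8*a+4-m)/2, (8*a+4-m)%2)

lemma dec_correct (a m : ℕ) (ha : 1 ≤ a) (h1 : 1 ≤ m) (h2 : m ≤ 8*a+4) :
    (dec a m).1 ≤ 1 ∧ (dec a m).2.1 ≤ 2*a ∧ (dec a m).2.2 ≤ 1 ∧
      mg a (dec a m).1 (dec a m).2.1 (dec a m).2.2 = m := by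
  unfold dec mg
  split_ifs <;> simp_all <;> omega

lemma dec_mg (a u p ε : ℕ) (ha : 1 ≤ a) (hu : u ≤ 1) (hp : p ≤ 2*a) (hε : ε ≤ 1) :
    dec a (mg a u p ε) = (u, p, ε) := by
  unfold dec mg
  split_ifs <;> simp_all [Prod.ext_iff] <;> omega

lemma add_mul_inj {B x y t t' : ℕ} (hx1 : 1 ≤ x) (hxB : x ≤ B) (hy1 : 1 ≤ y) (hyB : y ≤ B)
    (h : x + t*B = y + t'*B) : t = t' ∧ x = y := by
  have hB : 0 < B := by omega
  have e1 : (x - 1 + t*B)/B = t := by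
    rw [Nat.add_mul_div_right _ _ hB, Nat.div_eq_of_lt (by omega)]; omega
  have e2 : (y - 1 + t'*B)/B = t' := by
    rw [Nat.add_mul_div_right _ _ hB, Nat.div_eq_of_lt (by omega)]; omega
  have h' : x - 1 + t*B = y - 1 + t'*B := by omega
  have ht : t = t' := by rw [← e1, h', e2]
  refine ⟨ht, ?_⟩
  subst ht; omega

lemma sum_range_pair {β : Type*} [AddCommMonoid β] (M : ℕ) (f : ℕ → β) :
    ∑ c ∈ Finset.range (2*M), f c = ∑ p ∈ Finset.range M, (f (2*p) + f (2*p+1)) := by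
  induction M with
  | zero => simp
  | succ M ih =>
      rw [Finset.sum_range_succ, ← ih, show 2*(M+1) = 2*M+1+1 from by ring,
        Finset.sum_range_succ, Finset.sum_range_succ, add_assoc]

def pat (a p : ℕ) : ℤ := if p = 2*a then -2 else if p = 0 ∨ p % 2 = 1 then 1 else -1

lemma patsum_aux (a : ℕ) :
    ∑ p ∈ Finset.range (2*a+2), (if p = 0 ∨ p % 2 = 1 then (1:ℤ) else -1) = 2 := by
  induction a with
  | zero => norm_num [Finset.sum_range_succ]
  | succ a ih =>
      rw [show 2*(a+1)+2 = (2*a+2)+1+1 from by ring, Finset.sum_range_succ,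
        Finset.sum_range_succ, ih, if_neg (by omega : ¬(2*a+2 = 0 ∨ (2*a+2) % 2 = 1)),
        if_pos (by omega : (2*a+2+1 = 0 ∨ (2*a+2+1) % 2 = 1))]
      ring

lemma patsum (a : ℕ) (ha : 1 ≤ a) : ∑ p ∈ Finset.range (2*a+1), pat a p = 0 := by
  rw [Finset.sum_range_succ]
  have hlast : pat a (2*a) = -2 := by unfold pat; rw [if_pos rfl]
  rw [hlast]
  rw [Finset.sum_congr rfl (fun p hp => by
    simp only [Finset.mem_range] at hp
    unfold pat; rw [if_neg (by omega)])]
  rw [show 2*a = 2*(a-1)+2 from by omega, patsum_aux]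
  ring

lemma val_add_pair (a t u e p : ℕ) (ha : 1 ≤ a) (hp : p ≤ 2*a) :
    val a t u e p 0 + val a t u e p 1 =
      (if (u+e) % 2 = 0 then (1:ℤ) else -1) * (if u = 0 then (-1:ℤ) else 1) * pat a p := by
  unfold val mg pat
  split_ifs <;> simp only [Pos] at * <;> omega

lemma ind_pos_pair (a t u e p : ℕ) (ha : 1 ≤ a) (hp : p ≤ 2*a) :
    (if 0 < val a t u e p 0 then (1:ℕ) else 0) + (if 0 < val a t u e p 1 then 1 else 0) = 1 := by
  have h0 := val_pos_iff a t u e p 0 ha hp (by omega)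
  have h1 := val_pos_iff a t u e p 1 ha hp (by omega)
  have hf := Pos_flip_ε a u e p
  by_cases h : Pos a u e p 0
  · rw [if_pos (h0.mpr h), if_neg (by rw [h1, hf]; exact not_not_intro h)]
  · rw [if_neg (by rw [h0]; exact h), if_pos (h1.mpr (hf.mpr h))]

lemma ind_neg_pair (a t u e p : ℕ) (ha : 1 ≤ a) (hp : p ≤ 2*a) :
    (if val a t u e p 0 < 0 then (1:ℕ) else 0) + (if val a t u e p 1 < 0 then 1 else 0) = 1 := by
  have h0 := val_neg_iff a t u e p 0 ha hp (by omega)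
  have h1 := val_neg_iff a t u e p 1 ha hp (by omega)
  have hf := Pos_flip_ε a u e p
  by_cases h : Pos a u e p 0
  · rw [if_neg (by rw [h0]; exact not_not_intro h), if_pos (h1.mpr (fun hP => (hf.mp hP) h))]
  · rw [if_pos (h0.mpr h), if_neg (by rw [h1]; exact not_not_intro (hf.mpr h))]

lemma Pos_e_inj (a u p ε e e' : ℕ) (he : e ≤ 1) (he' : e' ≤ 1)
    (h : Pos a u e p ε ↔ Pos a u e' p ε) : e = e' := by
  unfold Pos at h; omega

lemma ind_pos_e (a t u p ε : ℕ) (ha : 1 ≤ a) (hp : p ≤ 2*a) (hε : ε ≤ 1) :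
    (if 0 < val a t u 0 p ε then (1:ℕ) else 0) + (if 0 < val a t u 1 p ε then 1 else 0) = 1 := by
  have h0 := val_pos_iff a t u 0 p ε ha hp hε
  have h1 := val_pos_iff a t u 1 p ε ha hp hε
  have hf := Pos_flip_e a u p ε
  by_cases h : Pos a u 0 p ε
  · rw [if_pos (h0.mpr h), if_neg (by rw [h1, hf]; exact not_not_intro h)]
  · rw [if_neg (by rw [h0]; exact h), if_pos (h1.mpr (hf.mpr h))]

lemma ind_neg_e (a t u p ε : ℕ) (ha : 1 ≤ a) (hp : p ≤ 2*a) (hε : ε ≤ 1) :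
    (if val a t u 0 p ε < 0 then (1:ℕ) else 0) + (if val a t u 1 p ε < 0 then 1 else 0) = 1 := by
  have h0 := val_neg_iff a t u 0 p ε ha hp hε
  have h1 := val_neg_iff a t u 1 p ε ha hp hε
  have hf := Pos_flip_e a u p ε
  by_cases h : Pos a u 0 p ε
  · rw [if_neg (by rw [h0]; exact not_not_intro h), if_pos (h1.mpr (fun hP => (hf.mp hP) h))]
  · rw [if_pos (h0.mpr h), if_neg (by rw [h1]; exact not_not_intro (hf.mpr h))]

lemma sum_fin_block {β : Type*} [AddCommMonoid β] (n r k : ℕ) (hr : 0 < r) (hk : (k+1)*r ≤ n)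
    (H : ℕ → β) :
    (∑ j : Fin n, if (j:ℕ) / r = k then H ((j:ℕ) % r) else 0) = ∑ c ∈ Finset.range r, H c := by
  rw [Fin.sum_univ_eq_sum_range (fun jv => if jv / r = k then H (jv % r) else 0) n,
    ← Finset.sum_filter]
  have hfil : (Finset.range n).filter (fun j => j / r = k) = Finset.Ico (k*r) (k*r+r) := by
    ext j
    simp only [Finset.mem_filter, Finset.mem_range, Finset.mem_Ico]
    constructor
    · rintro ⟨hjn, hd⟩
      have h1 := Nat.div_add_mod j r
      have h2 := Nat.mod_lt j hr
      have hc1 : r*k = k*r := Nat.mul_comm r k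
      rw [hd] at h1
      omega
    · rintro ⟨h1, h2⟩
      have h3 : (k+1)*r = k*r + r := by ring
      have hc1 : r*k = k*r := Nat.mul_comm r k
      have hc2 : r*(k+1) = (k+1)*r := Nat.mul_comm r (k+1)
      refine ⟨by omega, Nat.div_eq_of_lt_le (by omega) (by omega)⟩
  rw [hfil, Finset.sum_Ico_eq_sum_range]
  rw [show k*r + r - k*r = r from by omega]
  refine Finset.sum_congr rfl (fun c hc => ?_)
  simp only [Finset.mem_range] at hc
  rw [show (k*r + c) % r = c from by rw [mul_comm k r, Nat.mul_add_mod, Nat.mod_eq_of_lt hc]]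

lemma sum_fin_col {β : Type*} [AddCommMonoid β] (m k : ℕ) (hk : 2*k+1 < m) (F : ℕ → β) :
    (∑ i : Fin m, if k = (i:ℕ)/2 then F (i:ℕ) else 0) = F (2*k) + F (2*k+1) := by
  rw [Fin.sum_univ_eq_sum_range (fun iv => if k = iv/2 then F iv else 0) m,
    ← Finset.sum_filter]
  have hfil : (Finset.range m).filter (fun i => k = i/2) = {2*k, 2*k+1} := by
    ext i
    simp only [Finset.mem_filter, Finset.mem_range, Finset.mem_insert, Finset.mem_singleton]
    omega
  rw [hfil, Finset.sum_pair (by omega : 2*k ≠ 2*k+1)]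

-- specialized beta-normal corollaries
lemma sfb_one (n r k : ℕ) (hr : 0 < r) (hk : (k+1)*r ≤ n) :
    (∑ j : Fin n, if (j:ℕ) / r = k then (1:ℕ) else 0) = r := by
  have h := sum_fin_block n r k hr hk (fun _ => (1:ℕ))
  simpa using h

lemma sfb_val (a n r k t u e : ℕ) (hr : 0 < r) (hk : (k+1)*r ≤ n) :
    (∑ j : Fin n, if (j:ℕ) / r = k then val a t u e (((j:ℕ) % r)/2) (((j:ℕ) % r)%2) else 0)
      = ∑ c ∈ Finset.range r, val a t u e (c/2) (c%2) :=
  sum_fin_block n r k hr hk (fun c => val a t u e (c/2) (c%2))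

lemma sfb_pos (a n r k t u e : ℕ) (hr : 0 < r) (hk : (k+1)*r ≤ n) :
    (∑ j : Fin n, if (j:ℕ) / r = k then
        (if 0 < val a t u e (((j:ℕ) % r)/2) (((j:ℕ) % r)%2) then (1:ℕ) else 0) else 0)
      = ∑ c ∈ Finset.range r, (if 0 < val a t u e (c/2) (c%2) then (1:ℕ) else 0) :=
  sum_fin_block n r k hr hk (fun c => if 0 < val a t u e (c/2) (c%2) then (1:ℕ) else 0)

lemma sfb_neg (a n r k t u e : ℕ) (hr : 0 < r) (hk : (k+1)*r ≤ n) :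
    (∑ j : Fin n, if (j:ℕ) / r = k then
        (if val a t u e (((j:ℕ) % r)/2) (((j:ℕ) % r)%2) < 0 then (1:ℕ) else 0) else 0)
      = ∑ c ∈ Finset.range r, (if val a t u e (c/2) (c%2) < 0 then (1:ℕ) else 0) :=
  sum_fin_block n r k hr hk (fun c => if val a t u e (c/2) (c%2) < 0 then (1:ℕ) else 0)

lemma sfc_one (m k : ℕ) (hk : 2*k+1 < m) :
    (∑ i : Fin m, if k = (i:ℕ)/2 then (1:ℕ) else 0) = 2 := by
  have h := sum_fin_col m k hk (fun _ => (1:ℕ))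
  simpa using h

lemma sfc_val (a m k p ε : ℕ) (hk : 2*k+1 < m) :
    (∑ i : Fin m, if k = (i:ℕ)/2 then
        val a ((i:ℕ)/4) ((i:ℕ)/2 % 2) ((i:ℕ) % 2) p ε else 0)
      = val a (k/2) (k%2) 0 p ε + val a (k/2) (k%2) 1 p ε := by
  have h := sum_fin_col m k hk (fun iv => val a (iv/4) (iv/2 % 2) (iv % 2) p ε)
  rw [h, show 2*k/4 = k/2 from by omega, show 2*k/2 % 2 = k % 2 from by omega,
    show 2*k % 2 = 0 from by omega, show (2*k+1)/4 = k/2 from by omega,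
    show (2*k+1)/2 % 2 = k % 2 from by omega, show (2*k+1) % 2 = 1 from by omega]

lemma sfc_pos (a m k p ε : ℕ) (hk : 2*k+1 < m) :
    (∑ i : Fin m, if k = (i:ℕ)/2 then
        (if 0 < val a ((i:ℕ)/4) ((i:ℕ)/2 % 2) ((i:ℕ) % 2) p ε then (1:ℕ) else 0) else 0)
      = (if 0 < val a (k/2) (k%2) 0 p ε then (1:ℕ) else 0)
        + (if 0 < val a (k/2) (k%2) 1 p ε then (1:ℕ) else 0) := by
  have h := sum_fin_col m k hk
    (fun iv => if 0 < val a (iv/4) (iv/2 % 2) (iv % 2) p ε then (1:ℕ) else 0)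
  rw [h, show 2*k/4 = k/2 from by omega, show 2*k/2 % 2 = k % 2 from by omega,
    show 2*k % 2 = 0 from by omega, show (2*k+1)/4 = k/2 from by omega,
    show (2*k+1)/2 % 2 = k % 2 from by omega, show (2*k+1) % 2 = 1 from by omega]

lemma sfc_neg (a m k p ε : ℕ) (hk : 2*k+1 < m) :
    (∑ i : Fin m, if k = (i:ℕ)/2 then
        (if val a ((i:ℕ)/4) ((i:ℕ)/2 % 2) ((i:ℕ) % 2) p ε < 0 then (1:ℕ) else 0) else 0)
      = (if val a (k/2) (k%2) 0 p ε < 0 then (1:ℕ) else 0)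
        + (if val a (k/2) (k%2) 1 p ε < 0 then (1:ℕ) else 0) := by
  have h := sum_fin_col m k hk
    (fun iv => if val a (iv/4) (iv/2 % 2) (iv % 2) p ε < 0 then (1:ℕ) else 0)
  rw [h, show 2*k/4 = k/2 from by omega, show 2*k/2 % 2 = k % 2 from by omega,
    show 2*k % 2 = 0 from by omega, show (2*k+1)/4 = k/2 from by omega,
    show (2*k+1)/2 % 2 = k % 2 from by omega, show (2*k+1) % 2 = 1 from by omega]

-- pairing the range-(4a+2) sums
lemma range_val_sum (a t u e : ℕ) (ha : 1 ≤ a) :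
    ∑ c ∈ Finset.range (4*a+2), val a t u e (c/2) (c%2) = 0 := by
  rw [show 4*a+2 = 2*(2*a+1) from by ring, sum_range_pair]
  rw [Finset.sum_congr rfl (fun p hp => by
    simp only [Finset.mem_range] at hp
    rw [show 2*p/2 = p from by omega, show 2*p%2 = 0 from by omega,
      show (2*p+1)/2 = p from by omega, show (2*p+1)%2 = 1 from by omega,
      val_add_pair a t u e p ha (by omega)])]
  rw [← Finset.mul_sum, patsum a ha, mul_zero]

lemma range_pos_sum (a t u e : ℕ) (ha : 1 ≤ a) :
    ∑ c ∈ Finset.range (4*a+2), (if 0 < val a t u e (c/2) (c%2) then (1:ℕ) else 0) = 2*a+1 := by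
  rw [show 4*a+2 = 2*(2*a+1) from by ring, sum_range_pair]
  rw [Finset.sum_congr rfl (fun p hp => by
    simp only [Finset.mem_range] at hp
    rw [show 2*p/2 = p from by omega, show 2*p%2 = 0 from by omega,
      show (2*p+1)/2 = p from by omega, show (2*p+1)%2 = 1 from by omega,
      ind_pos_pair a t u e p ha (by omega)])]
  simp

lemma range_neg_sum (a t u e : ℕ) (ha : 1 ≤ a) :
    ∑ c ∈ Finset.range (4*a+2), (if val a t u e (c/2) (c%2) < 0 then (1:ℕ) else 0) = 2*a+1 := by
  rw [show 4*a+2 = 2*(2*a+1) from by ring, sum_range_pair]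
  rw [Finset.sum_congr rfl (fun p hp => by
    simp only [Finset.mem_range] at hp
    rw [show 2*p/2 = p from by omega, show 2*p%2 = 0 from by omega,
      show (2*p+1)/2 = p from by omega, show (2*p+1)%2 = 1 from by omega,
      ind_neg_pair a t u e p ha (by omega)])]
  simp

-- row lemmas
lemma hk_row (a b : ℕ) (i : Fin (4*b)) : ((i:ℕ)/2 + 1) * (4*a+2) ≤ 2*b*(4*a+2) := by
  have hi := i.isLt
  exact Nat.mul_le_mul_right _ (by omega)

lemma row_filter_card (a b : ℕ) (i : Fin (4*b)) :
    (Finset.univ.filter fun j => (Arr a b i j).isSome).card = 4*a+2 := by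
  have hfeq : (Finset.univ.filter fun j => (Arr a b i j).isSome)
      = Finset.univ.filter (fun j : Fin (2*b*(4*a+2)) => (j:ℕ)/(4*a+2) = (i:ℕ)/2) := by
    apply Finset.filter_congr
    intro j _
    unfold Arr
    split_ifs with h <;> simp [h]
  rw [hfeq, Finset.card_filter, sfb_one _ _ _ (by omega) (hk_row a b i)]

lemma row_sum (a b : ℕ) (ha : 1 ≤ a) (i : Fin (4*b)) :
    ∑ j, (Arr a b i j).getD 0 = 0 := by
  have h1 : ∀ j : Fin (2*b*(4*a+2)), (Arr a b i j).getD 0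
      = if (j:ℕ)/(4*a+2) = (i:ℕ)/2 then
          val a ((i:ℕ)/4) ((i:ℕ)/2 % 2) ((i:ℕ) % 2) (((j:ℕ) % (4*a+2))/2) (((j:ℕ) % (4*a+2))%2)
        else 0 := by
    intro j; unfold Arr; split_ifs <;> simp
  rw [Finset.sum_congr rfl (fun j _ => h1 j),
    sfb_val a _ _ _ _ _ _ (by omega) (hk_row a b i), range_val_sum a _ _ _ ha]

lemma row_pos_card (a b : ℕ) (ha : 1 ≤ a) (i : Fin (4*b)) :
    (Finset.univ.filter fun j => 0 < (Arr a b i j).getD 0).card = 2*a+1 := by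
  rw [Finset.card_filter]
  have h1 : ∀ j : Fin (2*b*(4*a+2)), (if 0 < (Arr a b i j).getD 0 then (1:ℕ) else 0)
      = if (j:ℕ)/(4*a+2) = (i:ℕ)/2 then
          (if 0 < val a ((i:ℕ)/4) ((i:ℕ)/2 % 2) ((i:ℕ) % 2)
              (((j:ℕ) % (4*a+2))/2) (((j:ℕ) % (4*a+2))%2) then (1:ℕ) else 0)
        else 0 := by
    intro j; unfold Arr; split_ifs <;> simp_all
  rw [Finset.sum_congr rfl (fun j _ => h1 j),
    sfb_pos a _ _ _ _ _ _ (by omega) (hk_row a b i), range_pos_sum a _ _ _ ha]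

lemma row_neg_card (a b : ℕ) (ha : 1 ≤ a) (i : Fin (4*b)) :
    (Finset.univ.filter fun j => (Arr a b i j).getD 0 < 0).card = 2*a+1 := by
  rw [Finset.card_filter]
  have h1 : ∀ j : Fin (2*b*(4*a+2)), (if (Arr a b i j).getD 0 < 0 then (1:ℕ) else 0)
      = if (j:ℕ)/(4*a+2) = (i:ℕ)/2 then
          (if val a ((i:ℕ)/4) ((i:ℕ)/2 % 2) ((i:ℕ) % 2)
              (((j:ℕ) % (4*a+2))/2) (((j:ℕ) % (4*a+2))%2) < 0 then (1:ℕ) else 0)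
        else 0 := by
    intro j; unfold Arr; split_ifs <;> simp_all
  rw [Finset.sum_congr rfl (fun j _ => h1 j),
    sfb_neg a _ _ _ _ _ _ (by omega) (hk_row a b i), range_neg_sum a _ _ _ ha]

-- column lemmas
lemma hk_col (a b : ℕ) (hb : 1 ≤ b) (j : Fin (2*b*(4*a+2))) :
    2*((j:ℕ)/(4*a+2))+1 < 4*b := by
  have hj := j.isLt
  have h1 : (j:ℕ)/(4*a+2) < 2*b := (Nat.div_lt_iff_lt_mul (by omega)).mpr (by
    have : 2*b*(4*a+2) = (2*b)*(4*a+2) := by ring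
    omega)
  omega

lemma col_filter_card (a b : ℕ) (hb : 1 ≤ b) (j : Fin (2*b*(4*a+2))) :
    (Finset.univ.filter fun i => (Arr a b i j).isSome).card = 2 := by
  have hfeq : (Finset.univ.filter fun i => (Arr a b i j).isSome)
      = Finset.univ.filter (fun i : Fin (4*b) => (j:ℕ)/(4*a+2) = (i:ℕ)/2) := by
    apply Finset.filter_congr
    intro i _
    unfold Arr
    split_ifs with h <;> simp [h]
  rw [hfeq, Finset.card_filter, sfc_one _ _ (hk_col a b hb j)]

lemma col_sum (a b : ℕ) (hb : 1 ≤ b) (j : Fin (2*b*(4*a+2))) :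
    ∑ i, (Arr a b i j).getD 0 = 0 := by
  have h1 : ∀ i : Fin (4*b), (Arr a b i j).getD 0
      = if (j:ℕ)/(4*a+2) = (i:ℕ)/2 then
          val a ((i:ℕ)/4) ((i:ℕ)/2 % 2) ((i:ℕ) % 2) (((j:ℕ) % (4*a+2))/2) (((j:ℕ) % (4*a+2))%2)
        else 0 := by
    intro i; unfold Arr; split_ifs <;> simp
  rw [Finset.sum_congr rfl (fun i _ => h1 i), sfc_val a _ _ _ _ (hk_col a b hb j), val_add_e]

lemma col_pos_card (a b : ℕ) (ha : 1 ≤ a) (hb : 1 ≤ b) (j : Fin (2*b*(4*a+2))) :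
    (Finset.univ.filter fun i => 0 < (Arr a b i j).getD 0).card = 1 := by
  rw [Finset.card_filter]
  have h1 : ∀ i : Fin (4*b), (if 0 < (Arr a b i j).getD 0 then (1:ℕ) else 0)
      = if (j:ℕ)/(4*a+2) = (i:ℕ)/2 then
          (if 0 < val a ((i:ℕ)/4) ((i:ℕ)/2 % 2) ((i:ℕ) % 2)
              (((j:ℕ) % (4*a+2))/2) (((j:ℕ) % (4*a+2))%2) then (1:ℕ) else 0)
        else 0 := by
    intro i; unfold Arr; split_ifs <;> simp_all
  rw [Finset.sum_congr rfl (fun i _ => h1 i), sfc_pos a _ _ _ _ (hk_col a b hb j)]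
  exact ind_pos_e a _ _ _ _ ha (by have := Nat.mod_lt (j:ℕ) (show 0 < 4*a+2 by omega); omega)
    (by omega)

lemma col_neg_card (a b : ℕ) (ha : 1 ≤ a) (hb : 1 ≤ b) (j : Fin (2*b*(4*a+2))) :
    (Finset.univ.filter fun i => (Arr a b i j).getD 0 < 0).card = 1 := by
  rw [Finset.card_filter]
  have h1 : ∀ i : Fin (4*b), (if (Arr a b i j).getD 0 < 0 then (1:ℕ) else 0)
      = if (j:ℕ)/(4*a+2) = (i:ℕ)/2 then
          (if val a ((i:ℕ)/4) ((i:ℕ)/2 % 2) ((i:ℕ) % 2)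
              (((j:ℕ) % (4*a+2))/2) (((j:ℕ) % (4*a+2))%2) < 0 then (1:ℕ) else 0)
        else 0 := by
    intro i; unfold Arr; split_ifs <;> simp_all
  rw [Finset.sum_congr rfl (fun i _ => h1 i), sfc_neg a _ _ _ _ (hk_col a b hb j)]
  exact ind_neg_e a _ _ _ _ ha (by have := Nat.mod_lt (j:ℕ) (show 0 < 4*a+2 by omega); omega)
    (by omega)

lemma cast_half (a b : ℕ) : ((4*b:ℕ):ℤ) * ((4*a+2:ℕ):ℤ) / 2 = ((b*(8*a+4) : ℕ) : ℤ) := by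
  push_cast
  rw [show (4*(b:ℤ))*(4*(a:ℤ)+2) = ((b:ℤ)*(8*(a:ℤ)+4))*2 from by ring]
  exact Int.mul_ediv_cancel _ two_ne_zero

lemma mag_le (a b t u p ε : ℕ) (ha : 1 ≤ a) (hb : 1 ≤ b) (hp : p ≤ 2*a) (hε : ε ≤ 1)
    (ht : t < b) : mg a u p ε + t*(8*a+4) ≤ b*(8*a+4) := by
  have h1 := mg_bounds a u p ε ha hp hε
  have h2 : t*(8*a+4) ≤ (b-1)*(8*a+4) := Nat.mul_le_mul_right _ (by omega)
  have h3 : (b-1)*(8*a+4) + (8*a+4) = b*(8*a+4) := by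
    rw [Nat.sub_one_mul]
    have h4 : 8*a+4 ≤ b*(8*a+4) := Nat.le_mul_of_pos_left _ (by omega)
    omega
  omega

lemma entry_SMRvalue (a b : ℕ) (ha : 1 ≤ a) (hb : 1 ≤ b) (i : Fin (4*b))
    (j : Fin (2*b*(4*a+2))) (x : ℤ) (h : Arr a b i j = some x) :
    SMRvalue (4*b) (4*a+2) 2 x := by
  unfold Arr at h
  split_ifs at h with hc
  · injection h with hx
    have hjm : (j:ℕ) % (4*a+2) < 4*a+2 := Nat.mod_lt _ (by omega)
    have hp : ((j:ℕ)%(4*a+2))/2 ≤ 2*a := by omega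
    have hε : ((j:ℕ)%(4*a+2))%2 ≤ 1 := by omega
    have hna := val_natAbs a ((i:ℕ)/4) ((i:ℕ)/2 % 2) ((i:ℕ) % 2)
      (((j:ℕ)%(4*a+2))/2) (((j:ℕ)%(4*a+2))%2)
    rw [hx] at hna
    have h1 := mg_bounds a ((i:ℕ)/2 % 2) (((j:ℕ)%(4*a+2))/2) (((j:ℕ)%(4*a+2))%2) ha hp hε
    have ht : (i:ℕ)/4 < b := by have := i.isLt; omega
    have h2 := mag_le a b ((i:ℕ)/4) ((i:ℕ)/2 % 2) (((j:ℕ)%(4*a+2))/2) (((j:ℕ)%(4*a+2))%2)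
      ha hb hp hε ht
    unfold SMRvalue
    rw [if_neg (by rw [show 4*b*(4*a+2) = 2*(2*b*(4*a+2)) from by ring]; omega)]
    refine ⟨by omega, ?_⟩
    rw [cast_half, Int.abs_eq_natAbs]
    omega

lemma arr_exists_unique (a b : ℕ) (ha : 1 ≤ a) (hb : 1 ≤ b) (x : ℤ)
    (hx : SMRvalue (4*b) (4*a+2) 2 x) :
    ∃! pr : Fin (4*b) × Fin (2*b*(4*a+2)), Arr a b pr.1 pr.2 = some x := by
  unfold SMRvalue at hx
  rw [if_neg (by rw [show 4*b*(4*a+2) = 2*(2*b*(4*a+2)) from by ring]; omega)] at hx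
  obtain ⟨hx0, hxle⟩ := hx
  rw [cast_half a b, Int.abs_eq_natAbs] at hxle
  have hμle : x.natAbs ≤ b*(8*a+4) := by exact_mod_cast hxle
  have hμ1 : 1 ≤ x.natAbs := by omega
  obtain ⟨t, m0, hm01, hm0B, hsum, htb⟩ :
      ∃ t m0, 1 ≤ m0 ∧ m0 ≤ 8*a+4 ∧ m0 + t*(8*a+4) = x.natAbs ∧ t < b := by
    refine ⟨(x.natAbs-1)/(8*a+4), (x.natAbs-1)%(8*a+4)+1, by omega, ?_, ?_, ?_⟩
    · have := Nat.mod_lt (x.natAbs-1) (show 0 < 8*a+4 by omega); omega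
    · have h' := Nat.mod_add_div' (x.natAbs-1) (8*a+4); omega
    · refine (Nat.div_lt_iff_lt_mul (show 0 < 8*a+4 by omega)).mpr ?_
      omega
  obtain ⟨hu, hp, hε, hmg⟩ := dec_correct a m0 ha hm01 hm0B
  set u := (dec a m0).1 with hud
  set p := (dec a m0).2.1 with hpd
  set ε := (dec a m0).2.2 with hεd
  set e := if (Pos a u 0 p ε ↔ 0 < x) then 0 else 1 with hed
  have he1 : e ≤ 1 := by rw [hed]; split_ifs <;> omega
  have hPos : Pos a u e p ε ↔ 0 < x := by
    rw [hed]; split_ifs with h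
    · exact h
    · rw [Pos_flip_e]; tauto
  have hNμ : mg a u p ε + t*(8*a+4) = x.natAbs := by rw [hmg]; exact hsum
  have hval_eq : val a t u e p ε = x := by
    unfold val
    rw [hNμ]
    split_ifs with hP
    · have : 0 < x := hPos.mp hP
      omega
    · have : ¬ 0 < x := fun hh => hP (hPos.mpr hh)
      omega
  have hi0 : 4*t+2*u+e < 4*b := by omega
  have hc0 : 2*p+ε < 4*a+2 := by omega
  have hj0 : (2*p+ε) + (2*t+u)*(4*a+2) < 2*b*(4*a+2) := by
    have h1 : (2*t+u)+1 ≤ 2*b := by omega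
    have h2 : ((2*t+u)+1)*(4*a+2) ≤ (2*b)*(4*a+2) := Nat.mul_le_mul_right _ h1
    have h3 : ((2*t+u)+1)*(4*a+2) = (2*t+u)*(4*a+2) + (4*a+2) := by ring
    have h4 : (2*b)*(4*a+2) = 2*b*(4*a+2) := by ring
    omega
  refine ⟨(⟨4*t+2*u+e, hi0⟩, ⟨(2*p+ε) + (2*t+u)*(4*a+2), hj0⟩), ?_, ?_⟩
  · show Arr a b ⟨4*t+2*u+e, hi0⟩ ⟨(2*p+ε) + (2*t+u)*(4*a+2), hj0⟩ = some x
    unfold Arr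
    have hdiv : ((2*p+ε) + (2*t+u)*(4*a+2)) / (4*a+2) = 2*t+u := by
      rw [Nat.add_mul_div_right _ _ (show 0 < 4*a+2 by omega), Nat.div_eq_of_lt hc0]
      omega
    have hmod : ((2*p+ε) + (2*t+u)*(4*a+2)) % (4*a+2) = 2*p+ε := by
      rw [Nat.add_mul_mod_self_right, Nat.mod_eq_of_lt hc0]
    show (if ((2*p+ε) + (2*t+u)*(4*a+2)) / (4*a+2) = (4*t+2*u+e) / 2 then
        some (val a ((4*t+2*u+e)/4) ((4*t+2*u+e)/2 % 2) ((4*t+2*u+e) % 2)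
          ((((2*p+ε) + (2*t+u)*(4*a+2)) % (4*a+2))/2)
          ((((2*p+ε) + (2*t+u)*(4*a+2)) % (4*a+2))%2))
      else none) = some x
    rw [hdiv, hmod, if_pos (show 2*t+u = (4*t+2*u+e)/2 from by omega)]
    rw [show (4*t+2*u+e)/4 = t from by omega, show (4*t+2*u+e)/2 % 2 = u from by omega,
      show (4*t+2*u+e) % 2 = e from by omega, show (2*p+ε)/2 = p from by omega,
      show (2*p+ε)%2 = ε from by omega]
    exact congrArg some hval_eq
  · rintro ⟨i, j⟩ hA
    unfold Arr at hA
    split_ifs at hA with hcnd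
    injection hA with hA
    have hjm : (j:ℕ) % (4*a+2) < 4*a+2 := Nat.mod_lt _ (by omega)
    have hp' : ((j:ℕ)%(4*a+2))/2 ≤ 2*a := by omega
    have hε' : ((j:ℕ)%(4*a+2))%2 ≤ 1 := by omega
    have hu' : (i:ℕ)/2 % 2 ≤ 1 := by omega
    have he' : (i:ℕ)%2 ≤ 1 := by omega
    have ht' : (i:ℕ)/4 < b := by have := i.isLt; omega
    have hNA : mg a ((i:ℕ)/2 % 2) (((j:ℕ)%(4*a+2))/2) (((j:ℕ)%(4*a+2))%2)
        + ((i:ℕ)/4)*(8*a+4) = x.natAbs := by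
      have h := congrArg Int.natAbs hA
      rw [val_natAbs] at h
      exact h
    have hb1 := mg_bounds a ((i:ℕ)/2 % 2) (((j:ℕ)%(4*a+2))/2) (((j:ℕ)%(4*a+2))%2) ha hp' hε'
    have hb2 := mg_bounds a u p ε ha hp hε
    obtain ⟨htt, hmm⟩ := add_mul_inj hb1.1 hb1.2 hb2.1 hb2.2 (hNA.trans hNμ.symm)
    have hdec1 := dec_mg a ((i:ℕ)/2 % 2) (((j:ℕ)%(4*a+2))/2) (((j:ℕ)%(4*a+2))%2) ha hu' hp' hε'
    have hdec2 := dec_mg a u p ε ha hu hp hε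
    rw [hmm, hdec2] at hdec1
    obtain ⟨huu, hpp, hεε⟩ : (i:ℕ)/2 % 2 = u ∧ ((j:ℕ)%(4*a+2))/2 = p ∧ ((j:ℕ)%(4*a+2))%2 = ε := by
      simpa [Prod.ext_iff, eq_comm] using hdec1
    have hPe : Pos a u ((i:ℕ)%2) p ε ↔ 0 < x := by
      have h := val_pos_iff a ((i:ℕ)/4) ((i:ℕ)/2 % 2) ((i:ℕ)%2)
        (((j:ℕ)%(4*a+2))/2) (((j:ℕ)%(4*a+2))%2) ha hp' hε'
      rw [hA, huu, hpp, hεε] at h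
      exact h.symm
    have hee : (i:ℕ)%2 = e := Pos_e_inj a u p ε _ e he' he1 (hPe.trans hPos.symm)
    have hiv : (i:ℕ) = 4*t+2*u+e := by omega
    have hjv : (j:ℕ) = (2*p+ε) + (2*t+u)*(4*a+2) := by
      have hd := Nat.div_add_mod (j:ℕ) (4*a+2)
      have hi2 : (i:ℕ)/2 = 2*t+u := by omega
      rw [hcnd, hi2] at hd
      have hcm2 : (4*a+2)*(2*t+u) = (2*t+u)*(4*a+2) := Nat.mul_comm _ _
      have hjmod2 : (j:ℕ)%(4*a+2) = 2*p+ε := by omega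
      omega
    exact Prod.ext (Fin.ext hiv) (Fin.ext hjv)

theorem main (a b : ℕ) (ha : 1 ≤ a) (hb : 1 ≤ b) :
    ShiftableSMR (4 * b) (2 * b * (4 * a + 2)) (4 * a + 2) 2 :=
  ⟨Arr a b,
    ⟨fun i => row_filter_card a b i,
     fun j => col_filter_card a b hb j,
     fun i j x h => entry_SMRvalue a b ha hb i j x h,
     fun x hx => arr_exists_unique a b ha hb x hx,
     fun i => row_sum a b ha i,
     fun j => col_sum a b hb j⟩,
    fun i => by rw [row_pos_card a b ha i, row_neg_card a b ha i],
    fun j => by rw [col_pos_card a b ha hb j, col_neg_card a b ha hb j]⟩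

end SMR11


theorem stmt_11 (a b : ℕ) (ha : 1 ≤ a) (hb : 1 ≤ b) :
    ShiftableSMR (4 * b) (2 * b * (4 * a + 2)) (4 * a + 2) 2 :=
  SMR11.main a b ha hb
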